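/- (Descent inequality with inexact subproblem solutions.) In the inexact setting, for every iteration t ≥ 1 and every δ > 0: F(x^{t+1}, x^t) − F(x^t, x^{t−1}) ≤ (3L/2 − γ/2 + Lδτ)‖Δ^{(t)}‖² − (ρ/2)‖Δ^{(t−1)}‖² + (L/δ) Σ_{k=1}^{τ} ‖Δ^{(t−k)}‖² + ⟨ε^t, Δ^{(t)}⟩. -/

import Mathlib

open scoped RealInnerProductSpace


set_option maxHeartbeats 1000000 in
lemma descent_aux {p : ℕ} {L : ℝ} (hL : 0 < L) (f : EuclideanSpace ℝ (Fin p) → ℝ)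
    (hdf : Differentiable ℝ f)
    (hl : ∀ u v, ‖gradient f u - gradient f v‖ ≤ L * ‖u - v‖)
    (a b : EuclideanSpace ℝ (Fin p)) :
    f b ≤ f a + ⟪gradient f a, b - a⟫ + L / 2 * ‖b - a‖ ^ 2 := by
  set v := b - a with hv
  set φ : ℝ → ℝ := fun s => ⟪gradient f (a + s • v), v⟫ with hφ
  have hline : ∀ s : ℝ, Continuous (fun s : ℝ => a + s • v) :=
    fun _ => continuous_const.add (continuous_id.smul continuous_const)
  have hder : ∀ s : ℝ, HasDerivAt (fun s : ℝ => f (a + s • v)) (φ s) s := by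
    intro s
    have h1 : HasFDerivAt f ((InnerProductSpace.toDual ℝ _) (gradient f (a + s • v))) (a + s • v) :=
      ((hdf _).hasGradientAt).hasFDerivAt
    have h2 : HasDerivAt (fun s : ℝ => a + s • v) v s := by
      simpa using ((hasDerivAt_id s).smul_const v).const_add a
    have h3 : HasDerivAt (fun s : ℝ => f (a + s • v))
        ((InnerProductSpace.toDual ℝ _) (gradient f (a + s • v)) v) s := h1.comp_hasDerivAt s h2
    convert h3 using 1
    simp [φ]
  have hcont : Continuous φ := by
    have hgc : Continuous (gradient f) := by
      refine (LipschitzWith.of_dist_le_mul (K := Real.toNNReal L) (f := gradient f) ?_).continuous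
      intro u w
      simpa [dist_eq_norm, Real.coe_toNNReal L hL.le] using hl u w
    exact (Continuous.inner (hgc.comp (hline 0)) continuous_const)
  have hFTC : ∫ s in (0:ℝ)..1, φ s = f (a + (1:ℝ) • v) - f (a + (0:ℝ) • v) :=
    intervalIntegral.integral_eq_sub_of_hasDerivAt (f := fun s : ℝ => f (a + s • v))
      (fun s _ => hder s) (hcont.intervalIntegrable 0 1)
  have hab : f b - f a = ∫ s in (0:ℝ)..1, φ s := by
    rw [hFTC]; norm_num [hv]
  have hub : Continuous (fun s : ℝ => φ 0 + L * s * ‖v‖ ^ 2) := by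
    exact continuous_const.add ((continuous_const.mul continuous_id).mul continuous_const)
  have hmono : ∫ s in (0:ℝ)..1, φ s ≤ ∫ s in (0:ℝ)..1, (φ 0 + L * s * ‖v‖ ^ 2) := by
    apply intervalIntegral.integral_mono_on (by norm_num)
      (hcont.intervalIntegrable 0 1) (hub.intervalIntegrable 0 1)
    intro s hs
    have h1 : φ s - φ 0 = ⟪gradient f (a + s • v) - gradient f a, v⟫ := by
      simp only [φ, inner_sub_left]
      norm_num
    have hcs : ⟪gradient f (a + s • v) - gradient f a, v⟫
        ≤ ‖gradient f (a + s • v) - gradient f a‖ * ‖v‖ := real_inner_le_norm _ _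
    have hl2 : ‖gradient f (a + s • v) - gradient f a‖ * ‖v‖ ≤ (L * ‖(a + s • v) - a‖) * ‖v‖ :=
      mul_le_mul_of_nonneg_right (hl _ _) (norm_nonneg _)
    have heq : (L * ‖(a + s • v) - a‖) * ‖v‖ = L * s * ‖v‖ ^ 2 := by
      rw [show (a + s • v) - a = s • v by abel, norm_smul, Real.norm_eq_abs,
        abs_of_nonneg hs.1]
      ring
    rw [heq] at hl2
    linarith [h1 ▸ (hcs.trans hl2)]
  have hint : ∫ s in (0:ℝ)..1, (φ 0 + L * s * ‖v‖ ^ 2) = φ 0 + L / 2 * ‖v‖ ^ 2 := by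
    rw [intervalIntegral.integral_add (intervalIntegrable_const)
      ((Continuous.intervalIntegrable (by fun_prop) 0 1))]
    have : ∫ s in (0:ℝ)..1, L * s * ‖v‖ ^ 2 = L / 2 * ‖v‖ ^ 2 := by
      have h1 : ∫ s in (0:ℝ)..1, L * s * ‖v‖ ^ 2 = (∫ s in (0:ℝ)..1, s) * (L * ‖v‖ ^ 2) := by
        rw [← intervalIntegral.integral_mul_const]
        congr 1 with s
        ring
      rw [h1, integral_id]
      ring
    rw [this]
    simp
  have hφ0 : φ 0 = ⟪gradient f a, b - a⟫ := by norm_num [φ, hv]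
  have := hint ▸ hmono
  rw [hφ0] at this
  linarith [hab]

lemma eps_limit {X Y c1 c2 : ℝ} (hc1 : 0 ≤ c1) (hc2 : 0 ≤ c2)
    (key : ∀ s : ℝ, 0 < s → s < 1 → X ≤ Y + s * (c1 - c2)) : X ≤ Y := by
  by_contra hcon
  push_neg at hcon
  have hC : (0:ℝ) < c1 + c2 + 1 := by linarith
  have hs0 : 0 < min (1/2) ((X - Y)/2/(c1 + c2 + 1)) :=
    lt_min (by norm_num) (div_pos (by linarith) hC)
  have hs1 : min (1/2) ((X - Y)/2/(c1 + c2 + 1)) < 1 :=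
    lt_of_le_of_lt (min_le_left _ _) (by norm_num)
  have h1 := key _ hs0 hs1
  have h2 : min (1/2) ((X - Y)/2/(c1 + c2 + 1)) * (c1 - c2)
      ≤ min (1/2) ((X - Y)/2/(c1 + c2 + 1)) * (c1 + c2 + 1) :=
    mul_le_mul_of_nonneg_left (by linarith) hs0.le
  have h3 : min (1/2) ((X - Y)/2/(c1 + c2 + 1)) * (c1 + c2 + 1) ≤ (X - Y)/2 :=
    (le_div_iff₀ hC).mp (min_le_right _ _)
  linarith

lemma strong_sub {p : ℕ} {γ ρ : ℝ} (hγ : 0 < γ) (hρ : 0 < ρ)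
    (h : EuclideanSpace ℝ (Fin p) → ℝ) (a b W : EuclideanSpace ℝ (Fin p))
    (hstrong : StrongConvexOn Set.univ γ (fun y => h y + ρ / 2 * ‖y - b‖ ^ 2))
    (hsubw : ∀ y, h a + ⟪W - ρ • (a - b), y - a⟫ ≤ h y) :
    h a + ρ / 2 * ‖a - b‖ ^ 2 + γ / 2 * ‖a - b‖ ^ 2 ≤ h b + ⟪W, a - b⟫ := by
  have hD : (0:ℝ) ≤ ‖a - b‖ ^ 2 := sq_nonneg _
  refine eps_limit (by positivity : (0:ℝ) ≤ γ / 2 * ‖a - b‖ ^ 2)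
    (by positivity : (0:ℝ) ≤ ρ / 2 * ‖a - b‖ ^ 2) ?_
  intro s hs0 hs1
  have hsc := hstrong.2 (Set.mem_univ a) (Set.mem_univ b)
    (by linarith : (0:ℝ) ≤ 1 - s) hs0.le (by ring)
  simp only [smul_eq_mul] at hsc
  have hz1 : (1 - s) • a + s • b - b = (1 - s) • (a - b) := by module
  have hz2 : (1 - s) • a + s • b - a = s • (b - a) := by module
  have hn1 : ‖(1 - s) • a + s • b - b‖ ^ 2 = (1 - s) ^ 2 * ‖a - b‖ ^ 2 := by
    rw [hz1, norm_smul, Real.norm_eq_abs, abs_of_nonneg (by linarith), mul_pow]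
  have hsub' := hsubw ((1 - s) • a + s • b)
  rw [hz2] at hsub'
  have hip : ⟪W - ρ • (a - b), s • (b - a)⟫
      = s * (-⟪W, a - b⟫ + ρ * ‖a - b‖ ^ 2) := by
    rw [real_inner_smul_right, inner_sub_left, real_inner_smul_left]
    have h1 : ⟪a - b, b - a⟫ = -‖a - b‖ ^ 2 := by
      rw [show b - a = -(a - b) by abel, inner_neg_right,
        real_inner_self_eq_norm_sq]
    have h2 : ⟪W, b - a⟫ = -⟪W, a - b⟫ := by
      rw [show b - a = -(a - b) by abel, inner_neg_right]
    rw [h1, h2]; ring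
  rw [hip] at hsub'
  rw [hn1] at hsc
  have hbb : ‖b - b‖ ^ 2 = 0 := by simp
  rw [hbb] at hsc
  nlinarith [hsc, hsub', hs0, mul_pos hs0 hs0]

lemma tele_bound {p τ : ℕ} (x : ℕ → EuclideanSpace ℝ (Fin p))
    (Δ : ℤ → EuclideanSpace ℝ (Fin p))
    (hΔ : ∀ s : ℤ, 0 ≤ s → Δ s = x (s.toNat + 1) - x s.toNat)
    (t s : ℕ) (hst : s ≤ t) (hts : t ≤ s + τ) :
    ‖x t - x s‖ ≤ ∑ k ∈ Finset.Icc 1 τ, ‖Δ ((t : ℤ) - (k : ℤ))‖ := by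
  have h1 : x t - x s = ∑ i ∈ Finset.Ico s t, (x (i + 1) - x i) := by
    rw [Finset.sum_Ico_eq_sub _ hst, Finset.sum_range_sub, Finset.sum_range_sub]
    abel
  have h2 : ‖x t - x s‖ ≤ ∑ i ∈ Finset.Ico s t, ‖x (i + 1) - x i‖ := by
    rw [h1]; exact norm_sum_le _ _
  refine h2.trans ?_
  have h3 : ∑ i ∈ Finset.Ico s t, ‖x (i + 1) - x i‖
      = ∑ k ∈ Finset.Icc 1 (t - s), ‖Δ ((t : ℤ) - (k : ℤ))‖ := by
    refine Finset.sum_nbij' (i := fun i => t - i) (j := fun k => t - k) ?_ ?_ ?_ ?_ ?_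
    · intro i hi
      simp only [Finset.mem_Ico] at hi
      simp only [Finset.mem_Icc]
      omega
    · intro k hk
      simp only [Finset.mem_Icc] at hk
      simp only [Finset.mem_Ico]
      omega
    · intro i hi; simp only [Finset.mem_Ico] at hi; show t - (t - i) = i; omega
    · intro k hk; simp only [Finset.mem_Icc] at hk; show t - (t - k) = k; omega
    · intro i hi
      simp only [Finset.mem_Ico] at hi
      have : ((t : ℤ) - ((t - i : ℕ) : ℤ)) = (i : ℤ) := by
        have : i ≤ t := by omega
        push_cast [Nat.cast_sub this]
        ring
      rw [this, hΔ (i : ℤ) (by positivity)]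
      simp
  rw [h3]
  refine Finset.sum_le_sum_of_subset_of_nonneg ?_ (fun k _ _ => norm_nonneg _)
  intro k hk
  simp only [Finset.mem_Icc] at hk ⊢
  omega


set_option maxHeartbeats 1000000 in
theorem stmt_16
    {p m τ : ℕ} (hp : 1 ≤ p) (hm : 0 < m)
    {L ρ γ : ℝ}
    (hL : 0 < L) (hρ : 0 < ρ) (hγ : 0 < γ)
    (Lf : Fin m → EuclideanSpace ℝ (Fin p) → ℝ)
    (hdiff : ∀ j, Differentiable ℝ (Lf j))
    (hlip : ∀ j (u v : EuclideanSpace ℝ (Fin p)), ‖gradient (Lf j) u - gradient (Lf j) v‖ ≤ L * ‖u - v‖)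
    (h : EuclideanSpace ℝ (Fin p) → ℝ)
    (hconv : ConvexOn ℝ Set.univ h)
    (hstrong : ∀ z : EuclideanSpace ℝ (Fin p), StrongConvexOn Set.univ γ (fun y => h y + ρ / 2 * ‖y - z‖ ^ 2))
    (tj : ℕ → Fin m → ℕ)
    (htj : ∀ t j, t - τ ≤ tj t j ∧ tj t j ≤ t)
    (x : ℕ → EuclideanSpace ℝ (Fin p))
    (eps : ℕ → EuclideanSpace ℝ (Fin p))
    (hsub : ∀ t (y : EuclideanSpace ℝ (Fin p)),
      h (x (t + 1)) + ⟪eps t - gradient (Lf ⟨0, hm⟩) (x (t + 1)) - (((m : ℝ)⁻¹ • ∑ j, gradient (Lf j) (x (tj t j)))) +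
          gradient (Lf ⟨0, hm⟩) (x (tj t ⟨0, hm⟩)) - ρ • (x (t + 1) - x t), y - x (t + 1)⟫ ≤ h y)
    (Δ : ℤ → EuclideanSpace ℝ (Fin p))
    (hΔ : ∀ s : ℤ, 0 ≤ s → Δ s = x (s.toNat + 1) - x s.toNat)
    (hΔneg : ∀ s : ℤ, s < 0 → Δ s = 0)
    (t : ℕ) (ht : 1 ≤ t) (δ : ℝ) (hδ : 0 < δ)
    :
    (((m : ℝ)⁻¹ * ∑ j, Lf j (x (t + 1))) + ρ / 2 * ‖x (t + 1) - x t‖ ^ 2 + h (x (t + 1))) - (((m : ℝ)⁻¹ * ∑ j, Lf j (x t)) + ρ / 2 * ‖x t - x (t - 1)‖ ^ 2 + h (x t)) ≤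
      (3 * L / 2 - γ / 2 + L * δ * τ) * ‖Δ (t : ℤ)‖ ^ 2 - ρ / 2 * ‖Δ ((t : ℤ) - 1)‖ ^ 2 +
        L / δ * ∑ k ∈ Finset.Icc 1 τ, ‖Δ ((t : ℤ) - (k : ℤ))‖ ^ 2 + ⟪eps t, Δ (t : ℤ)⟫ := by
  have hm' : (0:ℝ) < (m:ℝ) := by exact_mod_cast hm
  set j0 : Fin m := ⟨0, hm⟩ with hj0def
  have hΔt : Δ (t : ℤ) = x (t + 1) - x t := by
    rw [hΔ _ (by positivity)]; simp
  have hΔt1 : Δ ((t : ℤ) - 1) = x t - x (t - 1) := by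
    rw [hΔ _ (by omega)]
    have h1 : ((t : ℤ) - 1).toNat = t - 1 := by omega
    rw [h1, Nat.sub_add_cancel ht]
  rw [hΔt, hΔt1]
  set d := x (t + 1) - x t with hddef
  set S := ∑ k ∈ Finset.Icc 1 τ, ‖Δ ((t : ℤ) - (k : ℤ))‖ with hSdef
  set Q := ∑ k ∈ Finset.Icc 1 τ, ‖Δ ((t : ℤ) - (k : ℤ))‖ ^ 2 with hQdef
  -- Fact 1 : smoothness descent
  have F1 : (m:ℝ)⁻¹ * ∑ j, Lf j (x (t + 1)) ≤ (m:ℝ)⁻¹ * ∑ j, Lf j (x t)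
      + (m:ℝ)⁻¹ * (∑ j, ⟪gradient (Lf j) (x t), d⟫) + L / 2 * ‖d‖ ^ 2 := by
    have hsum : ∑ j, Lf j (x (t + 1))
        ≤ ∑ j, (Lf j (x t) + ⟪gradient (Lf j) (x t), d⟫ + L / 2 * ‖d‖ ^ 2) :=
      Finset.sum_le_sum fun j _ => descent_aux hL _ (hdiff j) (hlip j) (x t) (x (t + 1))
    rw [Finset.sum_add_distrib, Finset.sum_add_distrib, Finset.sum_const,
      Finset.card_univ, Fintype.card_fin, nsmul_eq_mul] at hsum
    have h2 := mul_le_mul_of_nonneg_left hsum (inv_nonneg.mpr hm'.le)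
    have h3 : (m:ℝ)⁻¹ * (∑ j, Lf j (x t) + ∑ j, ⟪gradient (Lf j) (x t), d⟫
        + (m:ℝ) * (L / 2 * ‖d‖ ^ 2))
        = (m:ℝ)⁻¹ * ∑ j, Lf j (x t) + (m:ℝ)⁻¹ * (∑ j, ⟪gradient (Lf j) (x t), d⟫)
          + L / 2 * ‖d‖ ^ 2 := by
      field_simp
    rw [h3] at h2
    exact h2
  -- Fact 2 : strong convexity
  set W := eps t - gradient (Lf j0) (x (t + 1)) - (((m : ℝ)⁻¹ • ∑ j, gradient (Lf j) (x (tj t j))))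
      + gradient (Lf j0) (x (tj t j0)) with hWdef
  have F2 : h (x (t + 1)) + ρ / 2 * ‖d‖ ^ 2 + γ / 2 * ‖d‖ ^ 2 ≤ h (x t) + ⟪W, d⟫ := by
    have := strong_sub hγ hρ h (x (t + 1)) (x t) W (hstrong (x t)) (fun y => hsub t y)
    simpa [hddef] using this
  -- expansion of ⟪W, d⟫
  have hWexp : ⟪W, d⟫ = ⟪eps t, d⟫ - ⟪gradient (Lf j0) (x (t + 1)), d⟫
      - (m:ℝ)⁻¹ * ∑ j, ⟪gradient (Lf j) (x (tj t j)), d⟫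
      + ⟪gradient (Lf j0) (x (tj t j0)), d⟫ := by
    rw [hWdef]
    rw [inner_add_left, inner_sub_left, inner_sub_left, real_inner_smul_left, sum_inner]
  -- delayed-gradient bounds
  have hdnn : (0:ℝ) ≤ ‖d‖ := norm_nonneg _
  have htele : ∀ j : Fin m, ‖x t - x (tj t j)‖ ≤ S := by
    intro j
    exact tele_bound x Δ hΔ t (tj t j) (htj t j).2 (by have := (htj t j).1; omega)
  have hjb : ∀ j : Fin m, ⟪gradient (Lf j) (x t), d⟫ - ⟪gradient (Lf j) (x (tj t j)), d⟫
      ≤ L * (S * ‖d‖) := by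
    intro j
    have e1 : ⟪gradient (Lf j) (x t), d⟫ - ⟪gradient (Lf j) (x (tj t j)), d⟫
        = ⟪gradient (Lf j) (x t) - gradient (Lf j) (x (tj t j)), d⟫ :=
      (inner_sub_left _ _ _).symm
    rw [e1]
    calc ⟪gradient (Lf j) (x t) - gradient (Lf j) (x (tj t j)), d⟫
        ≤ ‖gradient (Lf j) (x t) - gradient (Lf j) (x (tj t j))‖ * ‖d‖ := real_inner_le_norm _ _
      _ ≤ (L * ‖x t - x (tj t j)‖) * ‖d‖ :=
          mul_le_mul_of_nonneg_right (hlip j _ _) hdnn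
      _ ≤ (L * S) * ‖d‖ := by
          exact mul_le_mul_of_nonneg_right
            (mul_le_mul_of_nonneg_left (htele j) hL.le) hdnn
      _ = L * (S * ‖d‖) := by ring
  have hMav : (m:ℝ)⁻¹ * ∑ j, ⟪gradient (Lf j) (x t), d⟫
      - (m:ℝ)⁻¹ * ∑ j, ⟪gradient (Lf j) (x (tj t j)), d⟫ ≤ L * (S * ‖d‖) := by
    have hsum : ∑ j, (⟪gradient (Lf j) (x t), d⟫ - ⟪gradient (Lf j) (x (tj t j)), d⟫)
        ≤ (m:ℝ) * (L * (S * ‖d‖)) := by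
      calc ∑ j, (⟪gradient (Lf j) (x t), d⟫ - ⟪gradient (Lf j) (x (tj t j)), d⟫)
          ≤ ∑ _j : Fin m, L * (S * ‖d‖) := Finset.sum_le_sum fun j _ => hjb j
        _ = (m:ℝ) * (L * (S * ‖d‖)) := by
            rw [Finset.sum_const, Finset.card_univ, Fintype.card_fin, nsmul_eq_mul]
    rw [Finset.sum_sub_distrib] at hsum
    have h2 := mul_le_mul_of_nonneg_left hsum (inv_nonneg.mpr hm'.le)
    rw [mul_sub] at h2
    calc (m:ℝ)⁻¹ * ∑ j, ⟪gradient (Lf j) (x t), d⟫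
        - (m:ℝ)⁻¹ * ∑ j, ⟪gradient (Lf j) (x (tj t j)), d⟫
        ≤ (m:ℝ)⁻¹ * ((m:ℝ) * (L * (S * ‖d‖))) := h2
      _ = L * (S * ‖d‖) := by field_simp
  have hj0b : ⟪gradient (Lf j0) (x (tj t j0)), d⟫ - ⟪gradient (Lf j0) (x (t + 1)), d⟫
      ≤ L * ‖d‖ ^ 2 + L * (S * ‖d‖) := by
    have e1 : ⟪gradient (Lf j0) (x (tj t j0)), d⟫ - ⟪gradient (Lf j0) (x (t + 1)), d⟫
        = ⟪gradient (Lf j0) (x (tj t j0)) - gradient (Lf j0) (x (t + 1)), d⟫ :=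
      (inner_sub_left _ _ _).symm
    rw [e1]
    have htri : ‖x (tj t j0) - x (t + 1)‖ ≤ ‖d‖ + S := by
      rw [norm_sub_rev]
      calc ‖x (t + 1) - x (tj t j0)‖
          ≤ ‖x (t + 1) - x t‖ + ‖x t - x (tj t j0)‖ :=
            norm_sub_le_norm_sub_add_norm_sub _ _ _
        _ ≤ ‖d‖ + S := by
            rw [← hddef]
            exact add_le_add le_rfl (htele j0)
    calc ⟪gradient (Lf j0) (x (tj t j0)) - gradient (Lf j0) (x (t + 1)), d⟫
        ≤ ‖gradient (Lf j0) (x (tj t j0)) - gradient (Lf j0) (x (t + 1))‖ * ‖d‖ :=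
          real_inner_le_norm _ _
      _ ≤ (L * ‖x (tj t j0) - x (t + 1)‖) * ‖d‖ :=
          mul_le_mul_of_nonneg_right (hlip j0 _ _) hdnn
      _ ≤ (L * (‖d‖ + S)) * ‖d‖ :=
          mul_le_mul_of_nonneg_right (mul_le_mul_of_nonneg_left htri hL.le) hdnn
      _ = L * ‖d‖ ^ 2 + L * (S * ‖d‖) := by ring
  -- Young's inequality
  have F4 : L * (S * ‖d‖) ≤ L * δ * (τ:ℝ) / 2 * ‖d‖ ^ 2 + L / δ * Q / 2 := by
    have hyk : ∀ k ∈ Finset.Icc 1 τ, ‖Δ ((t : ℤ) - (k : ℤ))‖ * ‖d‖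
        ≤ δ / 2 * ‖d‖ ^ 2 + 1 / (2 * δ) * ‖Δ ((t : ℤ) - (k : ℤ))‖ ^ 2 := by
      intro k _
      have h2δ : (0:ℝ) < 2 * δ := by linarith
      have hk1 : (2 * δ) * (‖Δ ((t : ℤ) - (k : ℤ))‖ * ‖d‖)
          ≤ (2 * δ) * (δ / 2 * ‖d‖ ^ 2 + 1 / (2 * δ) * ‖Δ ((t : ℤ) - (k : ℤ))‖ ^ 2) := by
        have hrhs : (2 * δ) * (δ / 2 * ‖d‖ ^ 2 + 1 / (2 * δ) * ‖Δ ((t : ℤ) - (k : ℤ))‖ ^ 2)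
            = δ ^ 2 * ‖d‖ ^ 2 + ‖Δ ((t : ℤ) - (k : ℤ))‖ ^ 2 := by
          field_simp
        rw [hrhs]
        nlinarith [sq_nonneg (δ * ‖d‖ - ‖Δ ((t : ℤ) - (k : ℤ))‖)]
      exact le_of_mul_le_mul_left hk1 h2δ
    have hy : S * ‖d‖ ≤ δ / 2 * ‖d‖ ^ 2 * (τ:ℝ) + 1 / (2 * δ) * Q := by
      calc S * ‖d‖ = ∑ k ∈ Finset.Icc 1 τ, ‖Δ ((t : ℤ) - (k : ℤ))‖ * ‖d‖ := by
            rw [hSdef, Finset.sum_mul]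
        _ ≤ ∑ k ∈ Finset.Icc 1 τ,
            (δ / 2 * ‖d‖ ^ 2 + 1 / (2 * δ) * ‖Δ ((t : ℤ) - (k : ℤ))‖ ^ 2) :=
            Finset.sum_le_sum hyk
        _ = δ / 2 * ‖d‖ ^ 2 * (τ:ℝ) + 1 / (2 * δ) * Q := by
            rw [Finset.sum_add_distrib, Finset.sum_const, ← Finset.mul_sum, ← hQdef,
              Nat.card_Icc, nsmul_eq_mul]
            push_cast
            ring
    calc L * (S * ‖d‖) ≤ L * (δ / 2 * ‖d‖ ^ 2 * (τ:ℝ) + 1 / (2 * δ) * Q) :=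
          mul_le_mul_of_nonneg_left hy hL.le
      _ = L * δ * (τ:ℝ) / 2 * ‖d‖ ^ 2 + L / δ * Q / 2 := by
          field_simp
  linarith [F1, F2, hWexp, hMav, hj0b, F4]
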